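/- Let F be a piecewise translation of m = d+1 branches in ℝ^d whose translation vectors v_0, …, v_d have rank d (every d of them form a basis of ℝ^d). Then for every x ∈ Ω and every index i ∈ {0, …, d}, the orbit (F^n(x))_{n≥0} visits the partition element P_i infinitely many times, i.e. {n ∈ ℕ : F^n(x) ∈ P_i} is infinite. -/

import Mathlib

open MeasureTheory Topology Filter Set

/-- A piecewise translation map (PWT) of `m` branches in `ℝ^d`: a region `Ω`
partitioned into regions `P 0, …, P (m-1)` with null boundaries and pairwise disjoint
interiors, together with translation vectors `v i` such that `P i + v i ⊆ Ω`, and a fixed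
measurable resolution `idx` of the ambiguity on overlapping boundaries. -/
structure PWT (d m : ℕ) where
  Om : Set (Fin d → ℝ)
  P : Fin m → Set (Fin d → ℝ)
  v : Fin m → (Fin d → ℝ)
  idx : (Fin d → ℝ) → Fin m
  compact_Om : IsCompact Om
  region_Om : Om = closure (interior Om)
  compact_P : ∀ i, IsCompact (P i)
  region_P : ∀ i, P i = closure (interior (P i))
  union_P : Om = ⋃ i, P i
  disj_P : ∀ i j, i ≠ j → interior (P i) ∩ interior (P j) = ∅
  null_bd_P : ∀ i, volume (frontier (P i)) = 0
  translate_mem : ∀ i, ∀ x ∈ P i, x + v i ∈ Om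
  idx_mem : ∀ x ∈ Om, x ∈ P (idx x)
  idx_meas : Measurable idx

namespace PWT

variable {d m : ℕ}

/-- The piecewise translation map `F(x) = x + v_{i(x)}`. -/
def F (T : PWT d m) (x : Fin d → ℝ) : Fin d → ℝ := x + T.v (T.idx x)

/-- `Ω_0 = Ω`, `Ω_{n+1} = closure (F(Ω_n))`. -/
def OmSeq (T : PWT d m) : ℕ → Set (Fin d → ℝ)
  | 0 => T.Om
  | n + 1 => closure (T.F '' T.OmSeq n)

/-- The attractor `A = ⋂ₙ Ω_n`. -/
def attractor (T : PWT d m) : Set (Fin d → ℝ) := ⋂ n, T.OmSeq n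

/-- The fate map `𝓕(x) = (i(x), i(F x), i(F² x), …)`. -/
def fate (T : PWT d m) (x : Fin d → ℝ) : ℕ → Fin m := fun n => T.idx (T.F^[n] x)

/-- The matrix whose columns are the lattice generators `v_1 - v_0, …, v_d - v_0`. -/
noncomputable def latMatrix (T : PWT d (d + 1)) : Matrix (Fin d) (Fin d) ℝ :=
  Matrix.of fun i j => (T.v j.succ - T.v 0) i

/-- The canonical projection `π : ℝ^d → T = ℝ^d/L ≅ (ℝ/ℤ)^d`, expressed in the
coordinates given by the lattice basis `v_1 - v_0, …, v_d - v_0` of `L`. -/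
noncomputable def torusProj (T : PWT d (d + 1)) (x : Fin d → ℝ) : Fin d → AddCircle (1 : ℝ) :=
  fun i => ((T.latMatrix⁻¹.mulVec x) i : AddCircle (1 : ℝ))

end PWT


/-- For a piecewise translation of `m = d+1` branches in `ℝ^d` whose
translation vectors have rank `d` (every `d` of them form a basis of `ℝ^d`), the orbit of
every point `x ∈ Ω` visits every partition element `P i` infinitely many times. -/
theorem pwt_orbit_visits_infinitely {d : ℕ} (T : PWT d (d + 1))
    (hrank : ∀ j : Fin (d + 1),
      LinearIndependent ℝ (fun i : {i : Fin (d + 1) // i ≠ j} => T.v i)) :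
    ∀ x ∈ T.Om, ∀ i : Fin (d + 1), {n : ℕ | T.F^[n] x ∈ T.P i}.Infinite := by
  intro x hx i
  -- orbit stays in Ω
  have horb : ∀ n : ℕ, T.F^[n] x ∈ T.Om := by
    intro n
    induction n with
    | zero => simpa using hx
    | succ n ih =>
      rw [Function.iterate_succ_apply']
      exact T.translate_mem _ _ (T.idx_mem _ ih)
  intro hfin
  -- there is N s.t. for n ≥ N, orbit avoids P i
  obtain ⟨N, hN⟩ : ∃ N : ℕ, ∀ n ≥ N, T.F^[n] x ∉ T.P i := by
    obtain ⟨N, hN⟩ := (hfin.bddAbove)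
    exact ⟨N + 1, fun n hn hmem => by
      have := hN hmem
      omega⟩
  have hidx : ∀ n ≥ N, T.idx (T.F^[n] x) ≠ i := by
    intro n hn h
    exact hN n hn (h ▸ T.idx_mem _ (horb n))
  -- trivial case d = 0
  rcases Nat.eq_zero_or_pos d with hd | hd
  · subst hd
    have : {n : ℕ | T.F^[n] x ∈ T.P i} = Set.univ := by
      apply Set.eq_univ_of_forall
      intro n
      have h1 := horb n
      rw [T.union_P, Set.mem_iUnion] at h1
      obtain ⟨j, hj⟩ := h1
      have hij : i = j := Fin.ext (by omega)
      rwa [hij]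
    exact (this ▸ Set.infinite_univ) hfin
  -- basis from the d linearly independent vectors
  have : Nonempty {j : Fin (d + 1) // j ≠ i} := by
    have : Nontrivial (Fin (d + 1)) := Fin.nontrivial_iff_two_le.mpr (by omega)
    obtain ⟨j, hj⟩ := exists_ne i
    exact ⟨⟨j, hj⟩⟩
  have hcard : Fintype.card {j : Fin (d + 1) // j ≠ i} = d := by
    simp [Fintype.card_subtype_compl]
  have hfr : Fintype.card {j : Fin (d + 1) // j ≠ i}
      = Module.finrank ℝ (Fin d → ℝ) := by
    simp [hcard]
  let b : Module.Basis {j : Fin (d + 1) // j ≠ i} ℝ (Fin d → ℝ) :=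
    basisOfLinearIndependentOfCardEqFinrank (hrank i) hfr
  have hb : ∀ j : {j : Fin (d + 1) // j ≠ i}, b j = T.v j := by
    intro j; simp [b]
  -- the functional
  let φ : (Fin d → ℝ) →ₗ[ℝ] ℝ := b.sumCoords
  have hφv : ∀ j : Fin (d + 1), j ≠ i → φ (T.v j) = 1 := by
    intro j hj
    have : φ (b ⟨j, hj⟩) = 1 := b.sumCoords_self_apply ⟨j, hj⟩
    rwa [hb ⟨j, hj⟩] at this
  have hφcont : Continuous φ := φ.continuous_of_finiteDimensional
  -- φ is bounded above on Ω
  obtain ⟨C, hC⟩ : ∃ C : ℝ, ∀ y ∈ T.Om, φ y ≤ C := by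
    obtain ⟨C, hC⟩ := (T.compact_Om.image hφcont).bddAbove
    exact ⟨C, fun y hy => hC ⟨y, hy, rfl⟩⟩
  -- φ grows linearly along the orbit
  have hgrow : ∀ n : ℕ, φ (T.F^[N + n] x) = φ (T.F^[N] x) + n := by
    intro n
    induction n with
    | zero => simp
    | succ n ih =>
      have : T.F^[N + (n + 1)] x
          = T.F^[N + n] x + T.v (T.idx (T.F^[N + n] x)) := by
        rw [show N + (n + 1) = (N + n) + 1 by ring, Function.iterate_succ_apply']
        rfl
      rw [this, map_add, ih, hφv _ (hidx _ (Nat.le_add_right N n))]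
      push_cast; ring
  -- contradiction
  obtain ⟨n, hn⟩ := exists_nat_gt (C - φ (T.F^[N] x))
  have h1 := hC _ (horb (N + n))
  rw [hgrow n] at h1
  linarith
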